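/- In the generative model above with b = Σ_i y_i > 0, any vector w = τ·sign(Xᵀy) with τ > 0 satisfies ⟨w, x_test⟩ = τ(y_test + 2) > 0 for any fresh test point x_test drawn from the same distribution (whose unique features do not appear in the training set). Hence such w classifies every fresh test point as positive, and misclassifies every negative test point. -/

import Mathlib

/-- The data matrix of the generative model: example `i` (0-indexed) has its label in
coordinate 0, ones in coordinates 1 and 2, and ones in its block of unique features
`3 + 5 i, …, 3 + 5 i + 2 (1 − y_i)` (i.e. 1 unique feature if `y_i = 1`, 5 if `y_i = −1`);
all other coordinates are 0. -/
noncomputable def dataX (n : ℕ) (y : Fin n → ℝ) : Matrix (Fin n) (Fin (3 + 5 * n)) ℝ :=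
  fun i j =>
    if (j : ℕ) = 0 then y i
    else if (j : ℕ) = 1 ∨ (j : ℕ) = 2 then 1
    else if 3 + 5 * (i : ℕ) ≤ (j : ℕ) ∧
        (j : ℕ) ≤ 3 + 5 * (i : ℕ) + (if y i = 1 then 0 else 4) then 1
    else 0

open Finset Matrix in
/-- In the generative model with `b = ∑ y_i > 0`, any `w = τ • sign(Xᵀ y)` with `τ > 0`
satisfies `⟨w, x_test⟩ = τ (y_test + 2) > 0` for any fresh test point (whose unique
features do not appear in training, i.e. `sign(Xᵀy)` vanishes on its nonzero
coordinates past the first three).  Hence `w` classifies every fresh test point as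
positive, and in particular misclassifies every negative test point. -/
theorem adaptive_solution_classifies_positive {n : ℕ} (y : Fin n → ℝ)
    (hy : ∀ i, y i = 1 ∨ y i = -1) (hb : 0 < ∑ i, y i)
    (τ : ℝ) (hτ : 0 < τ)
    (w : Fin (3 + 5 * n) → ℝ)
    (hw : w = τ • fun j => Real.sign ((dataX n y).transpose.mulVec y j))
    (ytest : ℝ) (hytest : ytest = 1 ∨ ytest = -1)
    (xtest : Fin (3 + 5 * n) → ℝ)
    (hx0 : xtest ⟨0, by omega⟩ = ytest)
    (hx1 : xtest ⟨1, by omega⟩ = 1) (hx2 : xtest ⟨2, by omega⟩ = 1)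
    (hfresh : ∀ j : Fin (3 + 5 * n), 3 ≤ (j : ℕ) → xtest j ≠ 0 →
      Real.sign ((dataX n y).transpose.mulVec y j) = 0) :
    w ⬝ᵥ xtest = τ * (ytest + 2) ∧ 0 < w ⬝ᵥ xtest ∧
      (ytest = -1 → Real.sign (w ⬝ᵥ xtest) ≠ ytest) := by
  have hv : ∀ j : Fin (3 + 5 * n), (dataX n y).transpose.mulVec y j
      = ∑ i, dataX n y i j * y i := by
    intro j
    simp [Matrix.mulVec, dotProduct, Matrix.transpose]
  have h0 : (dataX n y).transpose.mulVec y ⟨0, by omega⟩ = (n : ℝ) := by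
    rw [hv]
    have : ∀ i : Fin n, dataX n y i ⟨0, by omega⟩ * y i = 1 := by
      intro i
      rcases hy i with h | h <;> simp [dataX, h]
    simp only [this]; simp
  have h1 : ∀ (k : ℕ) (hk : k = 1 ∨ k = 2) (hk3 : k < 3 + 5 * n),
      (dataX n y).transpose.mulVec y ⟨k, hk3⟩ = ∑ i, y i := by
    intro k hk hk3
    rw [hv]
    refine Finset.sum_congr rfl fun i _ => ?_
    have hk0 : k ≠ 0 := by omega
    simp [dataX, hk0, hk]
  have hn : 0 < n := by
    rcases Nat.eq_zero_or_pos n with h | h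
    · subst h; simp at hb
    · exact h
  have s0 : Real.sign ((dataX n y).transpose.mulVec y ⟨0, by omega⟩) = 1 := by
    rw [h0]; exact Real.sign_of_pos (by exact_mod_cast hn)
  have s1 : Real.sign ((dataX n y).transpose.mulVec y ⟨1, by omega⟩) = 1 := by
    rw [h1 1 (Or.inl rfl) (by omega)]; exact Real.sign_of_pos hb
  have s2 : Real.sign ((dataX n y).transpose.mulVec y ⟨2, by omega⟩) = 1 := by
    rw [h1 2 (Or.inr rfl) (by omega)]; exact Real.sign_of_pos hb
  set S : Finset (Fin (3 + 5 * n)) :=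
    {⟨0, by omega⟩, ⟨1, by omega⟩, ⟨2, by omega⟩} with hS
  have hdot : w ⬝ᵥ xtest = τ * (ytest + 2) := by
    have hsub : ∑ j, w j * xtest j = ∑ j ∈ S, w j * xtest j := by
      refine (Finset.sum_subset (Finset.subset_univ S) fun j _ hj => ?_).symm
      have hj3 : 3 ≤ (j : ℕ) := by
        simp only [hS, Finset.mem_insert, Finset.mem_singleton] at hj
        push_neg at hj
        obtain ⟨hj0, hj1, hj2⟩ := hj
        have : (j : ℕ) ≠ 0 := fun h => hj0 (Fin.ext h)
        have : (j : ℕ) ≠ 1 := fun h => hj1 (Fin.ext h)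
        have : (j : ℕ) ≠ 2 := fun h => hj2 (Fin.ext h)
        omega
      by_cases hx : xtest j = 0
      · simp [hx]
      · have := hfresh j hj3 hx
        simp [hw, this]
    have hdisj1 : (⟨0, by omega⟩ : Fin (3 + 5 * n)) ≠ ⟨1, by omega⟩ := by
      simp [Fin.ext_iff]
    have hdisj2 : (⟨0, by omega⟩ : Fin (3 + 5 * n)) ≠ ⟨2, by omega⟩ := by
      simp [Fin.ext_iff]
    have hdisj3 : (⟨1, by omega⟩ : Fin (3 + 5 * n)) ≠ ⟨2, by omega⟩ := by
      simp [Fin.ext_iff]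
    have : w ⬝ᵥ xtest = ∑ j ∈ S, w j * xtest j := by
      rw [← hsub]; rfl
    rw [this, hS, Finset.sum_insert (by simp [hdisj1, hdisj2]),
      Finset.sum_insert (by simp [hdisj3]), Finset.sum_singleton]
    simp only [hw, Pi.smul_apply, smul_eq_mul, s0, s1, s2, hx0, hx1, hx2]
    ring
  have hpos : 0 < w ⬝ᵥ xtest := by
    rw [hdot]
    rcases hytest with h | h <;> rw [h] <;> positivity
  exact ⟨hdot, hpos, fun h => by
    rw [Real.sign_of_pos hpos, h]; norm_num⟩
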